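/- With F as above and positive arguments, the partial derivative of F with respect to r equals (s-1)·x·y·(sx+3sy+x+y) / (4(x+2y)(rx+2sy)²); in particular ∂F/∂r > 0 if s > 1 and ∂F/∂r < 0 if s < 1. -/

import Mathlib

noncomputable def F (x y r s : ℝ) : ℝ :=
  (((s + 1) * x * y + (3 * s + 1) * y ^ 2) *
      (r * (s + 1) * x * y + s * (s + 3) * y ^ 2)) /
    (4 * s * y ^ 2 * (x + 2 * y) * (r * x + 2 * s * y))

theorem stmt2 (x y r s : ℝ) (hx : 0 < x) (hy : 0 < y) (hr : 0 < r) (hs : 0 < s) :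
    HasDerivAt (fun t => F x y t s)
      ((s - 1) * x * y * (s * x + 3 * s * y + x + y) /
        (4 * (x + 2 * y) * (r * x + 2 * s * y) ^ 2)) r ∧
    (1 < s →
      0 < (s - 1) * x * y * (s * x + 3 * s * y + x + y) /
        (4 * (x + 2 * y) * (r * x + 2 * s * y) ^ 2)) ∧
    (s < 1 →
      (s - 1) * x * y * (s * x + 3 * s * y + x + y) /
        (4 * (x + 2 * y) * (r * x + 2 * s * y) ^ 2) < 0) := by
  have hxy : 0 < x + 2 * y := by linarith
  have hrx : 0 < r * x + 2 * s * y := by positivity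
  have hden : (4 : ℝ) * s * y ^ 2 * (x + 2 * y) * (r * x + 2 * s * y) ≠ 0 := by positivity
  have hpos : 0 < 4 * (x + 2 * y) * (r * x + 2 * s * y) ^ 2 := by positivity
  refine ⟨?_, ?_, ?_⟩
  · have hN : HasDerivAt (fun t : ℝ =>
        ((s + 1) * x * y + (3 * s + 1) * y ^ 2) *
          (t * (s + 1) * x * y + s * (s + 3) * y ^ 2))
        (((s + 1) * x * y + (3 * s + 1) * y ^ 2) * ((s + 1) * x * y)) r := by
      have h1 : HasDerivAt (fun t : ℝ => t * (s + 1) * x * y + s * (s + 3) * y ^ 2)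
          ((s + 1) * x * y) r := by
        have := ((hasDerivAt_id r).mul_const ((s + 1) * x * y)).add_const (s * (s + 3) * y ^ 2)
        simpa [mul_assoc, mul_comm, mul_left_comm] using this
      simpa using h1.const_mul ((s + 1) * x * y + (3 * s + 1) * y ^ 2)
    have hD : HasDerivAt (fun t : ℝ => 4 * s * y ^ 2 * (x + 2 * y) * (t * x + 2 * s * y))
        (4 * s * y ^ 2 * (x + 2 * y) * x) r := by
      have h1 : HasDerivAt (fun t : ℝ => t * x + 2 * s * y) x r := by
        simpa using ((hasDerivAt_id r).mul_const x).add_const (2 * s * y)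
      have h2 := h1.const_mul (4 * s * y ^ 2 * (x + 2 * y))
      convert h2 using 1
    have := hN.div hD hden
    convert this using 1
    · rfl
    · rfl
    · rfl
    field_simp [F]
    ring
  · intro h1
    apply div_pos _ hpos
    have : 0 < s - 1 := by linarith
    positivity
  · intro h1
    apply div_neg_of_neg_of_pos _ hpos
    have hne : s - 1 < 0 := by linarith
    have : 0 < x * y * (s * x + 3 * s * y + x + y) := by positivity
    nlinarith
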